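/- Let (M, j, ⊗, σ) be a symmetric monoidal category, (C, i, ⊠, β) a braided monoidal category, and (C, •, η, μ, ι) a braided monoidal M-actegory. Then for every object m of M, the object m • i lies in the symmetric center of C: for every object d of C, β_{m • i, d} ≫ β_{d, m • i} = 𝟙_{(m • i) ⊠ d}. -/

import Mathlib

open CategoryTheory Category MonoidalCategory

universe v₁ v₂ v₃ u₁ u₂ u₃

variable (M : Type u₁) [Category.{v₁} M] [MonoidalCategory M]
variable (C : Type u₂) [Category.{v₂} C]

/-- The data of a left actegory. -/
structure LeftActegoryData where
  actObj : M → C → C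
  actHom : ∀ {m n : M} {c d : C}, (m ⟶ n) → (c ⟶ d) → (actObj m c ⟶ actObj n d)
  η : ∀ c : C, c ⟶ actObj (𝟙_ M) c
  η' : ∀ c : C, actObj (𝟙_ M) c ⟶ c
  μ : ∀ (m n : M) (c : C), actObj m (actObj n c) ⟶ actObj (m ⊗ n) c
  μ' : ∀ (m n : M) (c : C), actObj (m ⊗ n) c ⟶ actObj m (actObj n c)

variable {M C}

/-- The laws of a left actegory. -/
structure IsLeftActegory (A : LeftActegoryData M C) : Prop where
  actHom_id : ∀ (m : M) (c : C), A.actHom (𝟙 m) (𝟙 c) = 𝟙 (A.actObj m c)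
  actHom_comp : ∀ {m n p : M} {c d e : C} (g : m ⟶ n) (g' : n ⟶ p) (f : c ⟶ d) (f' : d ⟶ e),
      A.actHom (g ≫ g') (f ≫ f') = A.actHom g f ≫ A.actHom g' f'
  η_iso : ∀ c, A.η c ≫ A.η' c = 𝟙 c
  η'_iso : ∀ c, A.η' c ≫ A.η c = 𝟙 _
  μ_iso : ∀ m n c, A.μ m n c ≫ A.μ' m n c = 𝟙 _
  μ'_iso : ∀ m n c, A.μ' m n c ≫ A.μ m n c = 𝟙 _
  η_nat : ∀ {c d : C} (f : c ⟶ d), f ≫ A.η d = A.η c ≫ A.actHom (𝟙 (𝟙_ M)) f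
  μ_nat : ∀ {m m' n n' : M} {c c' : C} (g : m ⟶ m') (h : n ⟶ n') (f : c ⟶ c'),
      A.actHom g (A.actHom h f) ≫ A.μ m' n' c' = A.μ m n c ≫ A.actHom (g ⊗ₘ h) f
  pentagon : ∀ (m n p : M) (c : C),
      A.μ m n (A.actObj p c) ≫ A.μ (m ⊗ n) p c ≫ A.actHom (α_ m n p).hom (𝟙 c)
        = A.actHom (𝟙 m) (A.μ n p c) ≫ A.μ m (n ⊗ p) c
  triangle_left : ∀ (m : M) (c : C),
      A.η (A.actObj m c) ≫ A.μ (𝟙_ M) m c = A.actHom (λ_ m).inv (𝟙 c)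
  triangle_right : ∀ (m : M) (c : C),
      A.actHom (𝟙 m) (A.η c) ≫ A.μ m (𝟙_ M) c = A.actHom (ρ_ m).inv (𝟙 c)


variable [MonoidalCategory C]

variable (M C) in
/-- The data of a mixed interchanger for a left `M`-actegory on a monoidal
category `C`: a morphism `ι : (m ⊗ n) • (c ⊠ d) ⟶ (m • c) ⊠ (n • d)` together with
its (candidate) inverse. -/
structure InterchangerData (A : LeftActegoryData M C) where
  ι : ∀ (m n : M) (c d : C), A.actObj (m ⊗ n) (c ⊗ d) ⟶ A.actObj m c ⊗ A.actObj n d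
  ι' : ∀ (m n : M) (c d : C), A.actObj m c ⊗ A.actObj n d ⟶ A.actObj (m ⊗ n) (c ⊗ d)

/-- The laws of a monoidal `M`-actegory (`M` braided): the mixed interchanger is a
natural isomorphism satisfying the coherences (I)–(IV) with respect to the
associators and unitors of `M` and `C`, the unitor `η` and the multiplicator `μ`. -/
structure IsMonoidalActegory [BraidedCategory M]
    {A : LeftActegoryData M C} (I : InterchangerData M C A) : Prop where
  ι_iso : ∀ m n c d, I.ι m n c d ≫ I.ι' m n c d = 𝟙 _
  ι'_iso : ∀ m n c d, I.ι' m n c d ≫ I.ι m n c d = 𝟙 _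
  ι_nat : ∀ {m m' n n' : M} {c c' d d' : C} (g : m ⟶ m') (h : n ⟶ n')
      (f : c ⟶ c') (f' : d ⟶ d'),
      A.actHom (g ⊗ₘ h) (f ⊗ₘ f') ≫ I.ι m' n' c' d'
        = I.ι m n c d ≫ (A.actHom g f ⊗ₘ A.actHom h f')
  assoc : ∀ (m n p : M) (a b c : C),
      I.ι (m ⊗ n) p (a ⊗ b) c ≫ (I.ι m n a b ⊗ₘ 𝟙 (A.actObj p c))
          ≫ (α_ (A.actObj m a) (A.actObj n b) (A.actObj p c)).hom
        = A.actHom (α_ m n p).hom (α_ a b c).hom ≫ I.ι m (n ⊗ p) a (b ⊗ c)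
          ≫ (𝟙 (A.actObj m a) ⊗ₘ I.ι n p b c)
  unit_left : ∀ (m : M) (x : C),
      I.ι (𝟙_ M) m (𝟙_ C) x ≫ (A.η' (𝟙_ C) ⊗ₘ 𝟙 (A.actObj m x))
          ≫ (λ_ (A.actObj m x)).hom
        = A.actHom (λ_ m).hom (λ_ x).hom
  unit_right : ∀ (m : M) (x : C),
      I.ι m (𝟙_ M) x (𝟙_ C) ≫ (𝟙 (A.actObj m x) ⊗ₘ A.η' (𝟙_ C))
          ≫ (ρ_ (A.actObj m x)).hom
        = A.actHom (ρ_ m).hom (ρ_ x).hom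
  η_monoidal : ∀ (c d : C),
      A.actHom (λ_ (𝟙_ M)).hom (𝟙 (c ⊗ d)) ≫ A.η' (c ⊗ d)
        = I.ι (𝟙_ M) (𝟙_ M) c d ≫ (A.η' c ⊗ₘ A.η' d)
  μ_monoidal : ∀ (m n m' n' : M) (c d : C),
      A.actHom (𝟙 (m ⊗ n)) (I.ι m' n' c d) ≫ I.ι m n (A.actObj m' c) (A.actObj n' d)
          ≫ (A.μ m m' c ⊗ₘ A.μ n n' d)
        = A.μ (m ⊗ n) (m' ⊗ n') (c ⊗ d) ≫ A.actHom (tensorμ m n m' n') (𝟙 (c ⊗ d))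
          ≫ I.ι (m ⊗ m') (n ⊗ n') c d

/-- The derived strength `χ_{m,c,d} : m • (c ⊠ d) ⟶ (m • c) ⊠ d`. -/
def chi {A : LeftActegoryData M C} (I : InterchangerData M C A) (m : M) (c d : C) :
    A.actObj m (c ⊗ d) ⟶ A.actObj m c ⊗ d :=
  A.actHom (ρ_ m).inv (𝟙 (c ⊗ d)) ≫ I.ι m (𝟙_ M) c d ≫ (𝟙 (A.actObj m c) ⊗ₘ A.η' d)

/-- The inverse of the derived strength `χ`. -/
def chiInv {A : LeftActegoryData M C} (I : InterchangerData M C A) (m : M) (c d : C) :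
    A.actObj m c ⊗ d ⟶ A.actObj m (c ⊗ d) :=
  (𝟙 (A.actObj m c) ⊗ₘ A.η d) ≫ I.ι' m (𝟙_ M) c d ≫ A.actHom (ρ_ m).hom (𝟙 (c ⊗ d))

/-- The derived strength `κ_{m,c,d} : m • (c ⊠ d) ⟶ c ⊠ (m • d)`. -/
def kappa {A : LeftActegoryData M C} (I : InterchangerData M C A) (m : M) (c d : C) :
    A.actObj m (c ⊗ d) ⟶ c ⊗ A.actObj m d :=
  A.actHom (λ_ m).inv (𝟙 (c ⊗ d)) ≫ I.ι (𝟙_ M) m c d ≫ (A.η' c ⊗ₘ 𝟙 (A.actObj m d))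

/-- The inverse of the derived strength `κ`. -/
def kappaInv {A : LeftActegoryData M C} (I : InterchangerData M C A) (m : M) (c d : C) :
    c ⊗ A.actObj m d ⟶ A.actObj m (c ⊗ d) :=
  (A.η c ⊗ₘ 𝟙 (A.actObj m d)) ≫ I.ι' (𝟙_ M) m c d ≫ A.actHom (λ_ m).hom (𝟙 (c ⊗ d))

/-- **Statement 16.** Let `M` be symmetric, `C` braided, and `(C, •, η, μ, ι)` a
braided monoidal `M`-actegory (the interchanger is compatible with the symmetry of
`M` and the braiding of `C`). Then for every scalar `m`, the object `m • i` lies in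
the symmetric center of `C`: braiding twice with `m • i` is the identity. -/
theorem braidedActegory_actUnit_in_symmetricCenter
    [BraidedCategory C] [SymmetricCategory M]
    (A : LeftActegoryData M C) (hA : IsLeftActegory A)
    (I : InterchangerData M C A) (hI : IsMonoidalActegory I)
    (hbraid : ∀ (m n : M) (c d : C),
      A.actHom (β_ m n).hom (β_ c d).hom ≫ I.ι n m d c
        = I.ι m n c d ≫ (β_ (A.actObj m c) (A.actObj n d)).hom) :
    ∀ (m : M) (d : C),
      (β_ (A.actObj m (𝟙_ C)) d).hom ≫ (β_ d (A.actObj m (𝟙_ C))).hom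
        = 𝟙 (A.actObj m (𝟙_ C) ⊗ d) := by
  intro m d
  -- Claim 1: β_{m•i, d} = χ⁻¹ ≫ (m • β_{i,d}) ≫ κ
  have hmid : A.actHom (ρ_ m).hom (𝟙 (𝟙_ C ⊗ d))
      ≫ A.actHom (𝟙 m) (β_ (𝟙_ C) d).hom
      ≫ A.actHom (λ_ m).inv (𝟙 (d ⊗ 𝟙_ C))
      = A.actHom (β_ m (𝟙_ M)).hom (β_ (𝟙_ C) d).hom := by
    rw [← hA.actHom_comp, ← hA.actHom_comp, braiding_tensorUnit_right]
    simp
  have h1 : (β_ (A.actObj m (𝟙_ C)) d).hom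
      = chiInv I m (𝟙_ C) d ≫ A.actHom (𝟙 m) (β_ (𝟙_ C) d).hom
        ≫ kappa I m d (𝟙_ C) := by
    have hnat : (β_ (A.actObj m (𝟙_ C)) d).hom
        = (𝟙 (A.actObj m (𝟙_ C)) ⊗ₘ A.η d)
          ≫ (β_ (A.actObj m (𝟙_ C)) (A.actObj (𝟙_ M) d)).hom
          ≫ (A.η' d ⊗ₘ 𝟙 (A.actObj m (𝟙_ C))) := by
      rw [MonoidalCategory.id_tensorHom, MonoidalCategory.tensorHom_id,
        BraidedCategory.braiding_naturality_right_assoc,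
        ← comp_whiskerRight, hA.η_iso]
      simp
    rw [hnat]
    unfold chiInv kappa
    simp only [assoc]
    rw [reassoc_of% hmid, reassoc_of% (hbraid m (𝟙_ M) (𝟙_ C) d),
      reassoc_of% (hI.ι'_iso m (𝟙_ M) (𝟙_ C) d)]
  -- Claim 2: β_{d, m•i} = κ⁻¹ ≫ (m • β_{d,i}) ≫ χ
  have hmid2 : A.actHom (λ_ m).hom (𝟙 (d ⊗ 𝟙_ C))
      ≫ A.actHom (𝟙 m) (β_ d (𝟙_ C)).hom
      ≫ A.actHom (ρ_ m).inv (𝟙 (𝟙_ C ⊗ d))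
      = A.actHom (β_ (𝟙_ M) m).hom (β_ d (𝟙_ C)).hom := by
    rw [← hA.actHom_comp, ← hA.actHom_comp, braiding_tensorUnit_left]
    simp
  have h2 : (β_ d (A.actObj m (𝟙_ C))).hom
      = kappaInv I m d (𝟙_ C) ≫ A.actHom (𝟙 m) (β_ d (𝟙_ C)).hom
        ≫ chi I m (𝟙_ C) d := by
    have hnat : (β_ d (A.actObj m (𝟙_ C))).hom
        = (A.η d ⊗ₘ 𝟙 (A.actObj m (𝟙_ C)))
          ≫ (β_ (A.actObj (𝟙_ M) d) (A.actObj m (𝟙_ C))).hom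
          ≫ (𝟙 (A.actObj m (𝟙_ C)) ⊗ₘ A.η' d) := by
      rw [MonoidalCategory.id_tensorHom, MonoidalCategory.tensorHom_id,
        BraidedCategory.braiding_naturality_left_assoc,
        ← MonoidalCategory.whiskerLeft_comp, hA.η_iso]
      simp
    rw [hnat]
    unfold kappaInv chi
    simp only [assoc]
    rw [reassoc_of% hmid2, reassoc_of% (hbraid (𝟙_ M) m d (𝟙_ C)),
      reassoc_of% (hI.ι'_iso (𝟙_ M) m d (𝟙_ C))]
  rw [h1, h2]
  -- κ ≫ κ⁻¹ = 𝟙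
  have hk : kappa I m d (𝟙_ C) ≫ kappaInv I m d (𝟙_ C) = 𝟙 _ := by
    unfold kappa kappaInv
    simp only [assoc]
    rw [← assoc (A.η' d ⊗ₘ _), MonoidalCategory.tensorHom_comp_tensorHom, hA.η'_iso]
    simp only [comp_id, MonoidalCategory.id_tensorHom_id, id_comp]
    rw [← assoc (I.ι _ _ _ _), hI.ι_iso, id_comp, ← hA.actHom_comp]
    simp [hA.actHom_id]
  -- middle collapses
  have hmidβ : A.actHom (𝟙 m) (β_ (𝟙_ C) d).hom
      ≫ A.actHom (𝟙 m) (β_ d (𝟙_ C)).hom = 𝟙 _ := by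
    rw [← hA.actHom_comp, braiding_tensorUnit_left, braiding_tensorUnit_right]
    simp [hA.actHom_id]
  have hc : chiInv I m (𝟙_ C) d ≫ chi I m (𝟙_ C) d = 𝟙 _ := by
    unfold chi chiInv
    simp only [assoc]
    rw [← assoc (A.actHom (ρ_ m).hom _), ← hA.actHom_comp]
    simp only [Iso.hom_inv_id, comp_id, hA.actHom_id, id_comp]
    rw [← assoc (I.ι' _ _ _ _), hI.ι'_iso, id_comp,
      MonoidalCategory.tensorHom_comp_tensorHom, hA.η_iso]
    simp
  calc (chiInv I m (𝟙_ C) d ≫ A.actHom (𝟙 m) (β_ (𝟙_ C) d).hom ≫ kappa I m d (𝟙_ C))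
        ≫ kappaInv I m d (𝟙_ C) ≫ A.actHom (𝟙 m) (β_ d (𝟙_ C)).hom ≫ chi I m (𝟙_ C) d
      = chiInv I m (𝟙_ C) d ≫ A.actHom (𝟙 m) (β_ (𝟙_ C) d).hom
        ≫ (kappa I m d (𝟙_ C) ≫ kappaInv I m d (𝟙_ C))
        ≫ A.actHom (𝟙 m) (β_ d (𝟙_ C)).hom ≫ chi I m (𝟙_ C) d := by simp
    _ = chiInv I m (𝟙_ C) d ≫ (A.actHom (𝟙 m) (β_ (𝟙_ C) d).hom
        ≫ A.actHom (𝟙 m) (β_ d (𝟙_ C)).hom) ≫ chi I m (𝟙_ C) d := by rw [hk]; simp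
    _ = chiInv I m (𝟙_ C) d ≫ chi I m (𝟙_ C) d := by rw [hmidβ]; simp
    _ = 𝟙 _ := hc
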